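/- Let G be an n × m matrix over the finite field GF(q) such that any t columns of G are linearly independent. Then the multiset of row vectors { x·G : x ∈ GF(q)^n } forms an orthogonal array of strength t and index q^{n−t}: for any choice of t column indices j1 < ... < jt and any tuple (a1, ..., at) ∈ GF(q)^t, the number of x ∈ GF(q)^n such that (x·G)_{j_i} = a_i for all i equals q^{n−t}. -/

import Mathlib

theorem orthogonal_array_from_generator_matrix
    (q n m t : ℕ) (F : Type*) [Field F] [Fintype F] [DecidableEq F]
    (hq : Fintype.card F = q)
    (G : Matrix (Fin n) (Fin m) F)
    (hind : ∀ s : Finset (Fin m), s.card = t →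
      LinearIndependent F (fun j : s => (fun i => G i j.1))) :
    ∀ js : Fin t → Fin m, StrictMono js → ∀ a : Fin t → F,
      Fintype.card {x : Fin n → F // ∀ i, Matrix.vecMul x G (js i) = a i} =
        q ^ (n - t) := by
  intro js hjs a
  classical
  have hjsinj : Function.Injective js := hjs.injective
  -- the submatrix of selected columns
  set M : Matrix (Fin n) (Fin t) F := fun i k => G i (js k) with hM
  -- its columns are linearly independent
  have hcols : LinearIndependent F (fun k : Fin t => M.transpose k) := by
    set s : Finset (Fin m) := Finset.image js Finset.univ with hs
    have hcard : s.card = t := by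
      rw [hs, Finset.card_image_of_injective _ hjsinj, Finset.card_univ,
        Fintype.card_fin]
    have h1 := hind s hcard
    let e : Fin t → s := fun k => ⟨js k, by simp [hs]⟩
    have he : Function.Injective e := by
      intro k₁ k₂ h
      have : js k₁ = js k₂ := congrArg Subtype.val h
      exact hjsinj this
    exact h1.comp e he
  -- the linear map x ↦ x ᵥ* M = Mᵀ *ᵥ x
  set L : (Fin n → F) →ₗ[F] (Fin t → F) := Matrix.mulVecLin M.transpose with hL
  have hLker : Function.Injective M.mulVecLin := by
    rw [Matrix.coe_mulVecLin, Matrix.mulVec_injective_iff]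
    exact hcols
  -- t ≤ n
  have htn : t ≤ n := by
    have := hcols.fintype_card_le_finrank
    simpa [Module.finrank_fintype_fun_eq_card] using this
  -- L is surjective
  have hsurj : Function.Surjective L := by
    rw [← LinearMap.range_eq_top]
    apply Submodule.eq_top_of_finrank_eq
    have h1 : Module.finrank F (LinearMap.range L) = M.transpose.rank := rfl
    rw [h1, Matrix.rank_transpose]
    have h2 : M.rank = Module.finrank F (LinearMap.range M.mulVecLin) := rfl
    rw [h2, LinearMap.finrank_range_of_inj hLker]
  obtain ⟨x₀, hx₀⟩ := hsurj a
  -- the fiber is equivalent to the kernel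
  have hLeq : ∀ x : Fin n → F, (∀ i, Matrix.vecMul x G (js i) = a i) ↔ L x = a := by
    intro x
    constructor
    · intro h
      funext i
      rw [← h i]
      simp [hL, hM, Matrix.mulVec, Matrix.vecMul, dotProduct, Matrix.transpose, mul_comm]
    · intro h i
      rw [← congrFun h i]
      simp [hL, hM, Matrix.mulVec, Matrix.vecMul, dotProduct, Matrix.transpose, mul_comm]
  have e : {x : Fin n → F // ∀ i, Matrix.vecMul x G (js i) = a i} ≃
      LinearMap.ker L :=
    { toFun := fun x => ⟨x.1 - x₀, by
        rw [LinearMap.mem_ker, map_sub, (hLeq x.1).mp x.2, hx₀, sub_self]⟩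
      invFun := fun y => ⟨y.1 + x₀, by
        apply (hLeq _).mpr
        rw [map_add, y.2, hx₀, zero_add]⟩
      left_inv := fun x => by simp
      right_inv := fun y => by simp }
  rw [Fintype.card_congr e, ← Nat.card_eq_fintype_card]
  -- count the kernel
  have hcard := AddSubgroup.card_eq_card_quotient_mul_card_addSubgroup
      (LinearMap.ker L).toAddSubgroup
  have e2 : ((Fin n → F) ⧸ LinearMap.ker L) ≃ₗ[F] (Fin t → F) :=
    (L.quotKerEquivRange).trans
      (LinearEquiv.ofTop _ (LinearMap.range_eq_top.mpr hsurj))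
  have hquot : Nat.card ((Fin n → F) ⧸ (LinearMap.ker L).toAddSubgroup) =
      Nat.card (Fin t → F) := Nat.card_congr e2.toEquiv
  rw [hquot] at hcard
  have hFn : Nat.card (Fin n → F) = q ^ n := by
    simp [Nat.card_eq_fintype_card, hq]
  have hFt : Nat.card (Fin t → F) = q ^ t := by
    simp [Nat.card_eq_fintype_card, hq]
  rw [hFn, hFt] at hcard
  have hcard' : q ^ n = q ^ t * Nat.card (LinearMap.ker L) := hcard
  have hq1 : 1 ≤ q := by
    rw [← hq]; exact Fintype.card_pos
  have hqt : q ^ t ≠ 0 := pow_ne_zero _ (by omega)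
  have : q ^ t * q ^ (n - t) = q ^ t * Nat.card (LinearMap.ker L) := by
    rw [← pow_add, ← hcard']
    congr 1
    omega
  exact (Nat.eq_of_mul_eq_mul_left (by omega) this).symm
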